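/- arXiv:2310.06864 — 7 statements merged into one kernel-verified Lean document; each statement's English description precedes it below -/
import Mathlib

section
/- For each natural number n, the two-variable Hermite polynomial Z(x,y) = H_n(x,y) = n! * ∑_{r=0}^{⌊n/2⌋} y^r x^(n-2r) / ((n-2r)! r!) satisfies the heat equation ∂Z/∂y = ∂²Z/∂x², i.e., the partial derivative of H_n(x,y) with respect to y equals the second partial derivative with respect to x, for all real x, y. -/
/-- Two-variable Hermite (heat) polynomials. -/
noncomputable def H (n : ℕ) (x y : ℝ) : ℝ :=
  (n.factorial : ℝ) * ∑ r ∈ Finset.range (n / 2 + 1),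
    y ^ r * x ^ (n - 2 * r) / (((n - 2 * r).factorial : ℝ) * (r.factorial : ℝ))

private lemma deriv_term (m : ℕ) (d t : ℝ) :
    deriv (fun s : ℝ => s ^ m * d) t = (m : ℝ) * t ^ (m - 1) * d := by
  rw [deriv_mul_const (differentiableAt_pow m), deriv_pow_field]

theorem hermite_heat_equation (n : ℕ) (x y : ℝ) :
    deriv (fun t => H n x t) y = deriv (deriv (fun s => H n s y)) x := by
  set c : ℕ → ℝ := fun r => (((n - 2 * r).factorial : ℝ) * (r.factorial : ℝ)) with hc
  have hL : deriv (fun t => H n x t) y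
      = (n.factorial : ℝ) * ∑ r ∈ Finset.range (n / 2 + 1),
          (r : ℝ) * y ^ (r - 1) * (x ^ (n - 2 * r) / c r) := by
    have h1 : (fun t => H n x t) = fun t => (n.factorial : ℝ) *
        ∑ r ∈ Finset.range (n / 2 + 1), t ^ r * (x ^ (n - 2 * r) / c r) := by
      funext t; unfold H; congr 1
      refine Finset.sum_congr rfl fun r _ => by rw [hc]; ring
    rw [h1, deriv_const_mul_field,
      deriv_fun_sum (fun i _ => (differentiableAt_pow i).mul_const _)]
    congr 1
    exact Finset.sum_congr rfl fun r _ => deriv_term r _ y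
  have hx : deriv (fun s => H n s y) = fun s => (n.factorial : ℝ) *
      ∑ r ∈ Finset.range (n / 2 + 1),
        s ^ (n - 2 * r - 1) * (((n - 2 * r : ℕ) : ℝ) * (y ^ r / c r)) := by
    funext s
    have h1 : (fun s : ℝ => H n s y) = fun s => (n.factorial : ℝ) *
        ∑ r ∈ Finset.range (n / 2 + 1), s ^ (n - 2 * r) * (y ^ r / c r) := by
      funext u; unfold H; congr 1
      refine Finset.sum_congr rfl fun r _ => by rw [hc]; ring
    rw [h1, deriv_const_mul_field,
      deriv_fun_sum (fun i _ => (differentiableAt_pow _).mul_const _)]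
    congr 1
    refine Finset.sum_congr rfl fun r _ => ?_
    rw [deriv_term]; ring
  have hR : deriv (deriv (fun s => H n s y)) x
      = (n.factorial : ℝ) * ∑ r ∈ Finset.range (n / 2 + 1),
          ((n - 2 * r - 1 : ℕ) : ℝ) * x ^ (n - 2 * r - 1 - 1) *
            (((n - 2 * r : ℕ) : ℝ) * (y ^ r / c r)) := by
    rw [hx, deriv_const_mul_field,
      deriv_fun_sum (fun i _ => (differentiableAt_pow _).mul_const _)]
    congr 1
    exact Finset.sum_congr rfl fun r _ => deriv_term _ _ x
  rw [hL, hR]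
  congr 1
  rw [Finset.sum_range_succ' (fun r => (r : ℝ) * y ^ (r - 1) * (x ^ (n - 2 * r) / c r)),
      Finset.sum_range_succ]
  have hlast : ((n - 2 * (n / 2) - 1 : ℕ) : ℝ) * x ^ (n - 2 * (n / 2) - 1 - 1) *
      (((n - 2 * (n / 2) : ℕ) : ℝ) * (y ^ (n / 2) / c (n / 2))) = 0 := by
    have h : n - 2 * (n / 2) = n % 2 := by omega
    rcases Nat.mod_two_eq_zero_or_one n with h2 | h2 <;> rw [h, h2] <;> simp
  have hzero : ((0 : ℕ) : ℝ) * y ^ (0 - 1) * (x ^ (n - 2 * 0) / c 0) = 0 := by simp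
  rw [hlast, hzero, add_zero, add_zero]
  refine Finset.sum_congr rfl fun r hr => ?_
  have hr' : r < n / 2 := Finset.mem_range.mp hr
  obtain ⟨m, hm⟩ : ∃ m, n - 2 * r = m + 2 := ⟨n - 2 * r - 2, by omega⟩
  have e1 : n - 2 * (r + 1) = m := by omega
  have e2 : n - 2 * r - 1 = m + 1 := by omega
  have e3 : n - 2 * r - 1 - 1 = m := by omega
  rw [hc]
  simp only [hm, e1, e2, e3, Nat.add_sub_cancel]
  rw [Nat.factorial_succ (r), Nat.factorial_succ (m + 1), Nat.factorial_succ m]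
  have h1 : (m.factorial : ℝ) ≠ 0 := Nat.cast_ne_zero.mpr m.factorial_ne_zero
  have h2 : (r.factorial : ℝ) ≠ 0 := Nat.cast_ne_zero.mpr r.factorial_ne_zero
  push_cast
  field_simp
  ring
end

section
/- For n ≥ 1 and at every point (x,y) where H_n(x,y) ≠ 0, the function u(x,y) = n H_{n-1}(x,y) / H_n(x,y) satisfies the Burgers equation ∂u/∂y = ∂²u/∂x² + 2u ∂u/∂x. -/
noncomputable def u (n : ℕ) (x y : ℝ) : ℝ := (n : ℝ) * H (n - 1) x y / H n x y

lemma H_diff_x (n : ℕ) (y : ℝ) : Differentiable ℝ (fun s => H n s y) := by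
  unfold H
  exact Differentiable.const_mul (Differentiable.fun_sum fun r _ =>
    ((differentiable_pow _).const_mul _).div_const _) _

lemma H_diff_y (n : ℕ) (x : ℝ) : Differentiable ℝ (fun t => H n x t) := by
  unfold H
  exact Differentiable.const_mul (Differentiable.fun_sum fun r _ =>
    ((differentiable_pow _).mul_const _).div_const _) _

lemma H_deriv_x (n : ℕ) (x y : ℝ) :
    deriv (fun s => H n s y) x = (n : ℝ) * H (n - 1) x y := by
  rcases Nat.eq_zero_or_pos n with rfl | hn
  · have h0 : (fun s : ℝ => H 0 s y) = fun _ => 1 := by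
      funext s; simp [H]
    rw [h0]; simp
  · obtain ⟨m, rfl⟩ : ∃ m, n = m + 1 := ⟨n - 1, by omega⟩
    unfold H
    rw [deriv_const_mul _ (DifferentiableAt.fun_sum fun r _ =>
      ((differentiableAt_pow _).const_mul _).div_const _)]
    rw [deriv_fun_sum fun r _ => ((differentiableAt_pow _).const_mul _).div_const _]
    have hterm : ∀ r ∈ Finset.range ((m + 1) / 2 + 1),
        deriv (fun s : ℝ => y ^ r * s ^ (m + 1 - 2 * r) /
          (((m + 1 - 2 * r).factorial : ℝ) * (r.factorial : ℝ))) x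
        = y ^ r * (((m + 1 - 2 * r : ℕ) : ℝ) * x ^ (m + 1 - 2 * r - 1)) /
          (((m + 1 - 2 * r).factorial : ℝ) * (r.factorial : ℝ)) := by
      intro r _
      rw [deriv_div_const, deriv_const_mul _ (differentiableAt_pow _), deriv_pow_field]
    rw [Finset.sum_congr rfl hterm]
    rw [← Finset.sum_subset (Finset.range_subset_range.mpr (show m / 2 + 1 ≤ (m + 1) / 2 + 1 by omega))
      (by
        intro r h1 h2
        simp only [Finset.mem_range] at h1 h2
        have hz : m + 1 - 2 * r = 0 := by omega
        rw [hz]; simp)]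
    simp only [Nat.add_sub_cancel]
    rw [Finset.mul_sum, Finset.mul_sum, Finset.mul_sum]
    refine Finset.sum_congr rfl fun r hr => ?_
    simp only [Finset.mem_range] at hr
    have h1 : m + 1 - 2 * r = (m - 2 * r) + 1 := by omega
    rw [h1, Nat.add_sub_cancel, Nat.factorial_succ, Nat.factorial_succ]
    have f1 : ((m - 2 * r).factorial : ℝ) ≠ 0 := Nat.cast_ne_zero.mpr (Nat.factorial_ne_zero _)
    have f2 : (r.factorial : ℝ) ≠ 0 := Nat.cast_ne_zero.mpr (Nat.factorial_ne_zero _)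
    have f3 : ((m - 2 * r : ℕ) : ℝ) + 1 ≠ 0 := by positivity
    push_cast
    field_simp

lemma H_deriv_y (n : ℕ) (x y : ℝ) :
    deriv (fun t => H n x t) y = (n : ℝ) * ((n - 1 : ℕ) : ℝ) * H (n - 2) x y := by
  match n with
  | 0 =>
    have h0 : (fun t : ℝ => H 0 x t) = fun _ => 1 := by
      funext t; simp [H]
    rw [h0]; simp
  | 1 =>
    have h0 : (fun t : ℝ => H 1 x t) = fun _ => x := by
      funext t; simp [H]
    rw [h0]; simp
  | (m + 2) =>
    unfold H
    rw [deriv_const_mul _ (DifferentiableAt.fun_sum fun r _ =>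
      ((differentiableAt_pow _).mul_const _).div_const _)]
    rw [deriv_fun_sum fun r _ => ((differentiableAt_pow _).mul_const _).div_const _]
    have hterm : ∀ r ∈ Finset.range ((m + 2) / 2 + 1),
        deriv (fun t : ℝ => t ^ r * x ^ (m + 2 - 2 * r) /
          (((m + 2 - 2 * r).factorial : ℝ) * (r.factorial : ℝ))) y
        = ((r : ℝ) * y ^ (r - 1)) * x ^ (m + 2 - 2 * r) /
          (((m + 2 - 2 * r).factorial : ℝ) * (r.factorial : ℝ)) := by
      intro r _
      rw [deriv_div_const, deriv_mul_const (differentiableAt_pow _), deriv_pow_field]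
    rw [Finset.sum_congr rfl hterm]
    have hrange : (m + 2) / 2 + 1 = (m / 2 + 1) + 1 := by omega
    rw [hrange, Finset.sum_range_succ']
    simp only [Nat.cast_zero, zero_mul, zero_div, add_zero, Nat.add_sub_cancel]
    rw [Finset.mul_sum, Finset.mul_sum, Finset.mul_sum]
    refine Finset.sum_congr rfl fun r hr => ?_
    simp only [Finset.mem_range] at hr
    have h1 : m + 2 - 2 * (r + 1) = m - 2 * r := by omega
    have h3 : (m + 2).factorial = (m + 2) * (m + 1) * m.factorial := by
      rw [Nat.factorial_succ, Nat.factorial_succ]; ring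
    rw [h1, h3, Nat.factorial_succ, show m + 2 - 1 = m + 1 from by omega]
    have f1 : ((m - 2 * r).factorial : ℝ) ≠ 0 := Nat.cast_ne_zero.mpr (Nat.factorial_ne_zero _)
    have f2 : (r.factorial : ℝ) ≠ 0 := Nat.cast_ne_zero.mpr (Nat.factorial_ne_zero _)
    have f3 : ((r : ℕ) : ℝ) + 1 ≠ 0 := by positivity
    push_cast
    field_simp

lemma H_hasDerivAt_x (n : ℕ) (x y : ℝ) :
    HasDerivAt (fun s => H n s y) ((n : ℝ) * H (n - 1) x y) x := by
  have hd := (H_diff_x n y x).hasDerivAt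
  rwa [H_deriv_x] at hd

lemma H_hasDerivAt_y (n : ℕ) (x y : ℝ) :
    HasDerivAt (fun t => H n x t) ((n : ℝ) * ((n - 1 : ℕ) : ℝ) * H (n - 2) x y) y := by
  have hd := (H_diff_y n x y).hasDerivAt
  rwa [H_deriv_y] at hd

lemma u_deriv_x (n : ℕ) {x : ℝ} (y : ℝ) (h : H n x y ≠ 0) :
    deriv (fun s => u n s y) x =
      ((n : ℝ) * ((n - 1 : ℕ) : ℝ) * H (n - 2) x y * H n x y
        - (n : ℝ) ^ 2 * H (n - 1) x y ^ 2) / H n x y ^ 2 := by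
  have hB := H_hasDerivAt_x (n - 1) x y
  rw [show n - 1 - 1 = n - 2 from by omega] at hB
  have hA := H_hasDerivAt_x n x y
  have hu := (hB.const_mul (n : ℝ)).fun_div hA h
  simp only [u]
  rw [hu.deriv]
  rw [div_eq_div_iff (pow_ne_zero 2 h) (pow_ne_zero 2 h)]
  ring

theorem hermite_ratio_solves_burgers (n : ℕ) (hn : 1 ≤ n) (x y : ℝ) (h : H n x y ≠ 0) :
    deriv (fun t => u n x t) y =
      deriv (deriv (fun s => u n s y)) x + 2 * u n x y * deriv (fun s => u n s y) x := by
  have hyA := H_hasDerivAt_y n x y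
  have hyB := H_hasDerivAt_y (n - 1) x y
  rw [show n - 1 - 1 = n - 2 from by omega, show n - 1 - 2 = n - 3 from by omega] at hyB
  have hxA := H_hasDerivAt_x n x y
  have hxB := H_hasDerivAt_x (n - 1) x y
  rw [show n - 1 - 1 = n - 2 from by omega] at hxB
  have hxC := H_hasDerivAt_x (n - 2) x y
  rw [show n - 2 - 1 = n - 3 from by omega] at hxC
  -- second derivative in x
  have hev : ∀ᶠ s in nhds x, H n s y ≠ 0 :=
    ((H_diff_x n y).continuous.continuousAt).eventually_ne h
  have hev2 : deriv (fun s => u n s y) =ᶠ[nhds x]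
      (fun s => ((n : ℝ) * ((n - 1 : ℕ) : ℝ) * H (n - 2) s y * H n s y
        - (n : ℝ) ^ 2 * H (n - 1) s y ^ 2) / H n s y ^ 2) :=
    hev.mono fun s hs => u_deriv_x n y hs
  have hnum := ((hxC.const_mul ((n : ℝ) * ((n - 1 : ℕ) : ℝ))).fun_mul hxA).fun_sub
    ((hxB.fun_pow 2).const_mul ((n : ℝ) ^ 2))
  have hden := hxA.fun_pow 2
  have hg := hnum.fun_div hden (pow_ne_zero 2 h)
  have hD2 : deriv (deriv (fun s => u n s y)) x = _ := hev2.deriv_eq.trans hg.deriv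
  rw [u_deriv_x n y h, hD2]
  simp only [u]
  rw [((hyB.const_mul (n : ℝ)).fun_div hyA h).deriv]
  field_simp
  ring
end

section
/- Let Ψ : ℝ × ℝ → ℝ be sufficiently smooth, nowhere zero on an open set U, and satisfy the third-order heat equation ∂Ψ/∂y = ∂³Ψ/∂x³ on U. Then u = (∂Ψ/∂x)/Ψ satisfies ∂u/∂y = ∂³u/∂x³ + 3u ∂²u/∂x² + 3(∂u/∂x)² + 3u² ∂u/∂x on U. -/
theorem hopf_cole_third_order (Ψ : ℝ → ℝ → ℝ) (U : Set (ℝ × ℝ)) (hU : IsOpen U)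
    (hΨ : ContDiffOn ℝ 4 (fun p : ℝ × ℝ => Ψ p.1 p.2) U)
    (hne : ∀ x y : ℝ, (x, y) ∈ U → Ψ x y ≠ 0)
    (heat : ∀ x y : ℝ, (x, y) ∈ U →
      deriv (fun t => Ψ x t) y = deriv (deriv (deriv (fun s => Ψ s y))) x)
    (u : ℝ → ℝ → ℝ)
    (hu : ∀ x y : ℝ, u x y = deriv (fun s => Ψ s y) x / Ψ x y) :
    ∀ x y : ℝ, (x, y) ∈ U →
      deriv (fun t => u x t) y =
        deriv (deriv (deriv (fun s => u s y))) x
          + 3 * u x y * deriv (deriv (fun s => u s y)) x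
          + 3 * (deriv (fun s => u s y) x) ^ 2
          + 3 * (u x y) ^ 2 * deriv (fun s => u s y) x := by
  intro x y hxy
  set F : ℝ × ℝ → ℝ := fun p : ℝ × ℝ => Ψ p.1 p.2 with hFdef
  set V : Set ℝ := {s | (s, y) ∈ U} with hVdef
  have hVopen : IsOpen V := hU.preimage (Continuous.prodMk continuous_id continuous_const)
  have hxV : x ∈ V := hxy
  set g : ℝ → ℝ := fun s => Ψ s y with hgdef
  have hgC : ContDiffOn ℝ 4 g V :=
    hΨ.comp ((contDiff_id.prodMk contDiff_const).contDiffOn) (fun s hs => hs)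
  have h1 : ContDiffOn ℝ 3 (deriv g) V := hgC.deriv_of_isOpen hVopen (by norm_num)
  have h2 : ContDiffOn ℝ 2 (deriv (deriv g)) V := h1.deriv_of_isOpen hVopen (by norm_num)
  have h3 : ContDiffOn ℝ 1 (deriv (deriv (deriv g))) V := h2.deriv_of_isOpen hVopen (by norm_num)
  have d0 : ∀ s ∈ V, DifferentiableAt ℝ g s := fun s hs =>
    (hgC.contDiffAt (hVopen.mem_nhds hs)).differentiableAt (by norm_num)
  have d1 : ∀ s ∈ V, DifferentiableAt ℝ (deriv g) s := fun s hs =>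
    (h1.contDiffAt (hVopen.mem_nhds hs)).differentiableAt (by norm_num)
  have d2 : ∀ s ∈ V, DifferentiableAt ℝ (deriv (deriv g)) s := fun s hs =>
    (h2.contDiffAt (hVopen.mem_nhds hs)).differentiableAt (by norm_num)
  have d3 : ∀ s ∈ V, DifferentiableAt ℝ (deriv (deriv (deriv g))) s := fun s hs =>
    (h3.contDiffAt (hVopen.mem_nhds hs)).differentiableAt (by norm_num)
  have hne' : ∀ s ∈ V, g s ≠ 0 := fun s hs => hne s y hs
  -- u along the x-slice
  have hq : (fun s => u s y) = fun s => deriv g s / g s := by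
    funext s
    rw [hu s y, ← hgdef]
  -- first derivative in x on V
  have e1 : ∀ s ∈ V, deriv (fun s' => deriv g s' / g s') s =
      (deriv (deriv g) s * g s - deriv g s ^ 2) / g s ^ 2 := by
    intro s hs
    have : deriv (fun s' => deriv g s' / g s') s = _ :=
      ((d1 s hs).hasDerivAt.div (d0 s hs).hasDerivAt (hne' s hs)).deriv
    rw [this]; ring_nf
  -- second derivative in x on V
  have H2 : ∀ s ∈ V, HasDerivAt (deriv (fun s' => deriv g s' / g s'))
      ((deriv (deriv (deriv g)) s * g s ^ 2 - 3 * deriv g s * deriv (deriv g) s * g s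
        + 2 * deriv g s ^ 3) / g s ^ 3) s := by
    intro s hs
    have hnum : HasDerivAt (fun s' => deriv (deriv g) s' * g s' - deriv g s' ^ 2)
        (deriv (deriv (deriv g)) s * g s + deriv (deriv g) s * deriv g s
          - 2 * deriv g s ^ 1 * deriv (deriv g) s) s :=
      ((d2 s hs).hasDerivAt.mul (d0 s hs).hasDerivAt).sub ((d1 s hs).hasDerivAt.pow 2)
    have hden : HasDerivAt (fun s' => g s' ^ 2) (2 * g s ^ 1 * deriv g s) s :=
      (d0 s hs).hasDerivAt.pow 2
    have hD := hnum.div hden (pow_ne_zero 2 (hne' s hs))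
    have hD' := hD.congr_of_eventuallyEq
      (Filter.eventuallyEq_of_mem (hVopen.mem_nhds hs) (fun s' hs' => e1 s' hs'))
    refine hD'.congr_deriv ?_
    have hg0 := hne' s hs
    field_simp
    ring
  have e2 : ∀ s ∈ V, deriv (deriv (fun s' => deriv g s' / g s')) s =
      (deriv (deriv (deriv g)) s * g s ^ 2 - 3 * deriv g s * deriv (deriv g) s * g s
        + 2 * deriv g s ^ 3) / g s ^ 3 := fun s hs => (H2 s hs).deriv
  -- third derivative in x at x
  have e3 : deriv (deriv (deriv (fun s' => deriv g s' / g s'))) x =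
      (deriv (deriv (deriv (deriv g))) x * g x ^ 3
        - 4 * deriv g x * deriv (deriv (deriv g)) x * g x ^ 2
        - 3 * deriv (deriv g) x ^ 2 * g x ^ 2
        + 12 * deriv g x ^ 2 * deriv (deriv g) x * g x
        - 6 * deriv g x ^ 4) / g x ^ 4 := by
    have hnum := (((d3 x hxV).hasDerivAt.mul ((d0 x hxV).hasDerivAt.pow 2)).sub
        ((((d1 x hxV).hasDerivAt.const_mul 3).mul (d2 x hxV).hasDerivAt).mul
          (d0 x hxV).hasDerivAt)).add (((d1 x hxV).hasDerivAt.pow 3).const_mul 2)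
    have hden := (d0 x hxV).hasDerivAt.pow 3
    have hD := hnum.div hden (pow_ne_zero 3 (hne' x hxV))
    have hD' := hD.congr_of_eventuallyEq
      (Filter.eventuallyEq_of_mem (hVopen.mem_nhds hxV) (fun s' hs' => e2 s' hs'))
    rw [hD'.deriv]
    have hg0 := hne' x hxV
    simp only [Pi.add_apply, Pi.sub_apply, Pi.mul_apply, Pi.pow_apply]
    field_simp
    ring
  -- differentiability of F on U
  have hFd : ∀ p : ℝ × ℝ, p ∈ U → DifferentiableAt ℝ F p := fun p hp =>
    (hΨ.contDiffAt (hU.mem_nhds hp)).differentiableAt (by norm_num)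
  -- y-slice set
  set W : Set ℝ := {t | (x, t) ∈ U} with hWdef
  have hWopen : IsOpen W := hU.preimage (Continuous.prodMk continuous_const continuous_id)
  have hyW : y ∈ W := hxy
  -- partial derivative functions
  set h : ℝ × ℝ → ℝ := fun p => fderiv ℝ F p (1, 0) with hhdef
  set k : ℝ × ℝ → ℝ := fun p => fderiv ℝ F p (0, 1) with hkdef
  have hfd2C : ContDiffOn ℝ 3 (fderiv ℝ F) U := hΨ.fderiv_of_isOpen hU (by norm_num)
  have hfd2d : DifferentiableAt ℝ (fderiv ℝ F) (x, y) :=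
    (hfd2C.contDiffAt (hU.mem_nhds hxy)).differentiableAt (by norm_num)
  have hhC : ContDiffOn ℝ 3 h U := hfd2C.clm_apply contDiffOn_const
  have hkC : ContDiffOn ℝ 3 k U := hfd2C.clm_apply contDiffOn_const
  have hhd : DifferentiableAt ℝ h (x, y) :=
    (hhC.contDiffAt (hU.mem_nhds hxy)).differentiableAt (by norm_num)
  have hkd : DifferentiableAt ℝ k (x, y) :=
    (hkC.contDiffAt (hU.mem_nhds hxy)).differentiableAt (by norm_num)
  -- identification of partial derivatives with h, k
  have hA_eq : ∀ t ∈ W, deriv (fun s => Ψ s t) x = h (x, t) := fun t ht => by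
    have := ((hFd (x, t) ht).hasFDerivAt.comp_hasDerivAt x
      ((hasDerivAt_id x).prodMk (hasDerivAt_const x t))).deriv
    exact this
  have hk_eq : ∀ s ∈ V, k (s, y) = deriv (deriv (deriv g)) s := by
    intro s hs
    have hd : deriv (fun t => Ψ s t) y = (fderiv ℝ F (s, y)) (0, 1) :=
      ((hFd (s, y) hs).hasFDerivAt.comp_hasDerivAt y
        ((hasDerivAt_const y s).prodMk (hasDerivAt_id y))).deriv
    have hheat := heat s y hs
    rw [← hgdef] at hheat
    simp only [hkdef]
    rw [← hd, hheat]
  -- second derivative machinery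
  set e1' : ((ℝ × ℝ) →L[ℝ] ℝ) →L[ℝ] ℝ :=
    ContinuousLinearMap.apply ℝ ℝ ((1 : ℝ), (0 : ℝ)) with he1def
  set e2' : ((ℝ × ℝ) →L[ℝ] ℝ) →L[ℝ] ℝ :=
    ContinuousLinearMap.apply ℝ ℝ ((0 : ℝ), (1 : ℝ)) with he2def
  have hcomp1 : HasFDerivAt h (e1'.comp (fderiv ℝ (fderiv ℝ F) (x, y))) (x, y) :=
    e1'.hasFDerivAt.comp (x, y) hfd2d.hasFDerivAt
  have hcomp2 : HasFDerivAt k (e2'.comp (fderiv ℝ (fderiv ℝ F) (x, y))) (x, y) :=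
    e2'.hasFDerivAt.comp (x, y) hfd2d.hasFDerivAt
  have hsymm : IsSymmSndFDerivAt ℝ F (x, y) :=
    (hΨ.contDiffAt (hU.mem_nhds hxy)).isSymmSndFDerivAt (by norm_num)
  -- derivative of t ↦ h (x, t) at y
  have HAy : HasDerivAt (fun t => h (x, t)) (fderiv ℝ h (x, y) (0, 1)) y :=
    hhd.hasFDerivAt.comp_hasDerivAt y ((hasDerivAt_const y x).prodMk (hasDerivAt_id y))
  have HA : HasDerivAt (fun t => deriv (fun s => Ψ s t) x) (fderiv ℝ h (x, y) (0, 1)) y :=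
    HAy.congr_of_eventuallyEq
      (Filter.eventuallyEq_of_mem (hWopen.mem_nhds hyW) (fun t ht => hA_eq t ht))
  -- derivative of s ↦ k (s, y) at x
  have HKx : HasDerivAt (fun s => k (s, y)) (fderiv ℝ k (x, y) (1, 0)) x :=
    by have := hkd.hasFDerivAt.comp_hasDerivAt x ((hasDerivAt_id x).prodMk (hasDerivAt_const x y)); exact this
  have HK' : HasDerivAt (deriv (deriv (deriv g))) (fderiv ℝ k (x, y) (1, 0)) x :=
    HKx.congr_of_eventuallyEq
      (Filter.eventuallyEq_of_mem (hVopen.mem_nhds hxV) (fun s hs => (hk_eq s hs).symm))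
  have hP4eq : fderiv ℝ k (x, y) (1, 0) = deriv (deriv (deriv (deriv g))) x :=
    (HK'.deriv).symm ▸ rfl
  -- identify fderiv h (x,y) (0,1) with the fourth x-derivative
  have key : fderiv ℝ h (x, y) (0, 1) = deriv (deriv (deriv (deriv g))) x := by
    rw [hcomp1.fderiv]
    rw [← hP4eq, hcomp2.fderiv]
    simp only [ContinuousLinearMap.comp_apply, he1def, he2def,
      ContinuousLinearMap.apply_apply]
    exact hsymm (0, 1) (1, 0)
  rw [key] at HA
  -- derivative of t ↦ Ψ x t at y
  have hBd : HasDerivAt (fun t => Ψ x t) (fderiv ℝ F (x, y) (0, 1)) y :=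
    (hFd _ hxy).hasFDerivAt.comp_hasDerivAt y ((hasDerivAt_const y x).prodMk (hasDerivAt_id y))
  have hheatxy := heat x y hxy
  rw [← hgdef] at hheatxy
  have hB3 : fderiv ℝ F (x, y) (0, 1) = deriv (deriv (deriv g)) x := by
    rw [← hBd.deriv, hheatxy]
  rw [hB3] at hBd
  -- LHS
  have hgx : Ψ x y = g x := rfl
  have huy : (fun t => u x t) = fun t => deriv (fun s => Ψ s t) x / Ψ x t :=
    funext fun t => hu x t
  have hLHS : deriv (fun t => u x t) y =
      (deriv (deriv (deriv (deriv g))) x * g x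
        - deriv g x * deriv (deriv (deriv g)) x) / g x ^ 2 := by
    rw [huy]
    have : deriv (fun t => deriv (fun s => Ψ s t) x / Ψ x t) y = _ := (HA.div hBd (hne x y hxy)).deriv
    rw [this]
  rw [hLHS, hq, hu x y, ← hgdef, hgx, e3, e2 x hxV, e1 x hxV]
  have hg0 := hne' x hxV
  field_simp
  ring
end

section
/- For each natural number n and each m ≥ 1, the lacunary m-th order Hermite polynomial H_n^{(m)}(x,y) = n! * ∑_{r=0}^{⌊n/m⌋} y^r x^(n-mr) / ((n-mr)! r!) satisfies the higher-order heat equation ∂H_n^{(m)}/∂y = ∂^m H_n^{(m)}/∂x^m for all real x, y. -/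
/-- Lacunary m-th order Hermite polynomials. -/
noncomputable def Hm (m n : ℕ) (x y : ℝ) : ℝ :=
  (n.factorial : ℝ) * ∑ r ∈ Finset.range (n / m + 1),
    y ^ r * x ^ (n - m * r) / (((n - m * r).factorial : ℝ) * (r.factorial : ℝ))

lemma lhs_deriv (m n : ℕ) (x y : ℝ) :
    deriv (fun t => Hm m n x t) y =
      (n.factorial : ℝ) * ∑ r ∈ Finset.range (n / m + 1),
        (r : ℝ) * y ^ (r - 1) * x ^ (n - m * r) /
          (((n - m * r).factorial : ℝ) * (r.factorial : ℝ)) := by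
  have h : HasDerivAt (fun t => Hm m n x t)
      ((n.factorial : ℝ) * ∑ r ∈ Finset.range (n / m + 1),
        (r : ℝ) * y ^ (r - 1) * x ^ (n - m * r) /
          (((n - m * r).factorial : ℝ) * (r.factorial : ℝ))) y := by
    unfold Hm
    refine HasDerivAt.const_mul _ ?_
    refine HasDerivAt.fun_sum fun r _ => ?_
    have := ((hasDerivAt_pow r y).mul_const
      (x ^ (n - m * r) / (((n - m * r).factorial : ℝ) * (r.factorial : ℝ))))
    convert this using 1
    · rfl
    · funext t; ring
    · ring
  exact h.deriv

lemma rhs_iter (m n : ℕ) (y : ℝ) (j : ℕ) :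
    (deriv^[j]) (fun s => Hm m n s y) =
      fun x => (n.factorial : ℝ) * ∑ r ∈ Finset.range (n / m + 1),
        y ^ r * ((n - m * r).descFactorial j : ℝ) * x ^ (n - m * r - j) /
          (((n - m * r).factorial : ℝ) * (r.factorial : ℝ)) := by
  induction j with
  | zero =>
    funext x
    simp [Hm, mul_comm]
  | succ j ih =>
    rw [Function.iterate_succ_apply', ih]
    funext x
    have h : HasDerivAt (fun x => (n.factorial : ℝ) * ∑ r ∈ Finset.range (n / m + 1),
        y ^ r * ((n - m * r).descFactorial j : ℝ) * x ^ (n - m * r - j) /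
          (((n - m * r).factorial : ℝ) * (r.factorial : ℝ)))
        ((n.factorial : ℝ) * ∑ r ∈ Finset.range (n / m + 1),
        y ^ r * ((n - m * r).descFactorial (j+1) : ℝ) * x ^ (n - m * r - (j+1)) /
          (((n - m * r).factorial : ℝ) * (r.factorial : ℝ))) x := by
      refine HasDerivAt.const_mul _ ?_
      refine HasDerivAt.fun_sum fun r _ => ?_
      have := ((hasDerivAt_pow (n - m * r - j) x).const_mul
        (y ^ r * ((n - m * r).descFactorial j : ℝ))).div_const
        (((n - m * r).factorial : ℝ) * (r.factorial : ℝ))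
      convert this using 1
      · rfl
      have h1 : ((n - m * r).descFactorial (j+1) : ℝ) =
          ((n - m * r - j : ℕ) : ℝ) * ((n - m * r).descFactorial j : ℝ) := by
        rw [Nat.descFactorial_succ]; push_cast; ring
      have h2 : n - m * r - (j + 1) = n - m * r - j - 1 := by omega
      rw [h1, h2]; ring
    exact h.deriv
theorem higher_order_heat_equation (m n : ℕ) (hm : 1 ≤ m) (x y : ℝ) :
    deriv (fun t => Hm m n x t) y = (deriv^[m]) (fun s => Hm m n s y) x := by
  rw [lhs_deriv, rhs_iter]
  congr 1
  -- peel off last term of RHS (zero) and first term of LHS (zero)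
  rw [Finset.sum_range_succ', Finset.sum_range_succ]
  have hlast : (y : ℝ) ^ (n / m) * ((n - m * (n / m)).descFactorial m : ℝ) *
      x ^ (n - m * (n / m) - m) /
      (((n - m * (n / m)).factorial : ℝ) * ((n / m).factorial : ℝ)) = 0 := by
    have : n - m * (n / m) < m := by
      have e1 := Nat.div_add_mod n m
      have e2 := Nat.mod_lt n (show 0 < m by omega)
      omega
    rw [Nat.descFactorial_eq_zero_iff_lt.mpr this]
    simp
  rw [hlast, add_zero]
  simp only [Nat.cast_zero, zero_mul, zero_div, add_zero]
  refine Finset.sum_congr rfl fun s hs => ?_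
  have hs' : s < n / m := Finset.mem_range.mp hs
  have hsm : m * (s + 1) ≤ n := by
    have h1 := (Nat.le_div_iff_mul_le (show 0 < m by omega)).mp (show s + 1 ≤ n / m by omega)
    have h2 : (s + 1) * m = m * (s + 1) := by ring
    omega
  have hd : m * (s + 1) = m * s + m := by ring
  have hge : m ≤ n - m * s := by omega
  have key : ((n - m * s - m).factorial : ℝ) * ((n - m * s).descFactorial m : ℝ) =
      ((n - m * s).factorial : ℝ) := by
    rw [← Nat.cast_mul, Nat.factorial_mul_descFactorial hge]
  have hexp : n - m * (s + 1) = n - m * s - m := by omega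
  have hfac : ((s + 1).factorial : ℝ) = ((s : ℝ) + 1) * (s.factorial : ℝ) := by
    rw [Nat.factorial_succ]; push_cast; ring
  rw [hexp, hfac]
  have f1 : ((n - m * s - m).factorial : ℝ) ≠ 0 := Nat.cast_ne_zero.mpr (Nat.factorial_ne_zero _)
  have f2 : ((n - m * s).factorial : ℝ) ≠ 0 := Nat.cast_ne_zero.mpr (Nat.factorial_ne_zero _)
  have f3 : ((s).factorial : ℝ) ≠ 0 := Nat.cast_ne_zero.mpr (Nat.factorial_ne_zero _)
  have f4 : ((s : ℝ) + 1) ≠ 0 := by positivity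
  push_cast
  field_simp
  rw [← key]
  ring
end

section
/- For each natural number n, the two-variable Laguerre polynomial L_n(x,t) = n! * ∑_{r=0}^{n} t^(n-r) x^r / ((n-r)! (r!)²) satisfies the Laguerre diffusion equation ∂L_n/∂t = ∂/∂x ( x ∂L_n/∂x ) for all real x, t. -/
/-- Two-variable Laguerre polynomials. -/
noncomputable def L (n : ℕ) (x t : ℝ) : ℝ :=
  (n.factorial : ℝ) * ∑ r ∈ Finset.range (n + 1),
    t ^ (n - r) * x ^ r / (((n - r).factorial : ℝ) * ((r.factorial : ℝ)) ^ 2)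

lemma hL_x (n : ℕ) (t x : ℝ) :
    HasDerivAt (fun s' => L n s' t)
      ((n.factorial : ℝ) * ∑ r ∈ Finset.range (n + 1),
        t ^ (n - r) * ((r : ℝ) * x ^ (r - 1)) / (((n - r).factorial : ℝ) * ((r.factorial : ℝ)) ^ 2)) x := by
  unfold L
  apply HasDerivAt.const_mul
  apply HasDerivAt.fun_sum
  intro r _
  have h := ((hasDerivAt_pow r x).const_mul (t ^ (n - r))).div_const
    (((n - r).factorial : ℝ) * ((r.factorial : ℝ)) ^ 2)
  convert h using 1

lemma hL_t (n : ℕ) (x t : ℝ) :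
    HasDerivAt (fun s => L n x s)
      ((n.factorial : ℝ) * ∑ r ∈ Finset.range (n + 1),
        (((n - r : ℕ) : ℝ) * t ^ (n - r - 1)) * x ^ r / (((n - r).factorial : ℝ) * ((r.factorial : ℝ)) ^ 2)) t := by
  unfold L
  apply HasDerivAt.const_mul
  apply HasDerivAt.fun_sum
  intro r _
  have h := ((hasDerivAt_pow (n - r) t).mul_const (x ^ r)).div_const
    (((n - r).factorial : ℝ) * ((r.factorial : ℝ)) ^ 2)
  convert h using 1

theorem laguerre_diffusion (n : ℕ) (x t : ℝ) :
    deriv (fun s => L n x s) t =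
      deriv (fun s => s * deriv (fun s' => L n s' t) s) x := by
  have hinner : (fun s => s * deriv (fun s' => L n s' t) s) =
      fun s => (n.factorial : ℝ) * ∑ r ∈ Finset.range (n + 1),
        t ^ (n - r) * ((r : ℝ) * s ^ r) / (((n - r).factorial : ℝ) * ((r.factorial : ℝ)) ^ 2) := by
    funext s
    rw [(hL_x n t s).deriv, Finset.mul_sum, Finset.mul_sum, Finset.mul_sum]
    apply Finset.sum_congr rfl
    intro r _
    rcases r with _ | r
    · simp
    · rw [Nat.add_sub_cancel]
      have : s * s ^ r = s ^ (r + 1) := by rw [pow_succ]; ring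
      field_simp
      ring
  rw [hinner]
  have hR : HasDerivAt (fun s => (n.factorial : ℝ) * ∑ r ∈ Finset.range (n + 1),
        t ^ (n - r) * ((r : ℝ) * s ^ r) / (((n - r).factorial : ℝ) * ((r.factorial : ℝ)) ^ 2))
      ((n.factorial : ℝ) * ∑ r ∈ Finset.range (n + 1),
        t ^ (n - r) * ((r : ℝ) * ((r : ℝ) * x ^ (r - 1))) / (((n - r).factorial : ℝ) * ((r.factorial : ℝ)) ^ 2)) x := by
    apply HasDerivAt.const_mul
    apply HasDerivAt.fun_sum
    intro r _
    have h := (((hasDerivAt_pow r x).const_mul (r : ℝ)).const_mul (t ^ (n - r))).div_const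
      (((n - r).factorial : ℝ) * ((r.factorial : ℝ)) ^ 2)
    convert h using 1
  rw [(hL_t n x t).deriv, hR.deriv]
  congr 1
  rw [Finset.sum_range_succ, Finset.sum_range_succ']
  simp only [Nat.sub_self, Nat.cast_zero, zero_mul, mul_zero, zero_div, add_zero,
    Nat.cast_ofNat]
  norm_num
  apply Finset.sum_congr rfl
  intro r hr
  have hr' : r < n := Finset.mem_range.mp hr
  have h1 : n - r = (n - r - 1) + 1 := by omega
  have h2 : n - (r + 1) = n - r - 1 := by omega
  rw [h2, h1, Nat.factorial_succ, Nat.factorial_succ r]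
  have hnr : ((n - r - 1 : ℕ) : ℝ) + 1 = ((n : ℝ) - r) := by
    have : ((n - r - 1 + 1 : ℕ) : ℝ) = ((n : ℝ) - r) := by
      rw [← h1, Nat.cast_sub hr'.le]
    push_cast at this
    linarith
  push_cast
  have hf1 : ((n - r - 1).factorial : ℝ) ≠ 0 := Nat.cast_ne_zero.mpr (Nat.factorial_ne_zero _)
  have hf2 : ((r.factorial : ℝ)) ≠ 0 := Nat.cast_ne_zero.mpr (Nat.factorial_ne_zero _)
  have hnr2 : ((n : ℝ) - r) ≠ 0 := by
    have : (r : ℝ) < n := by exact_mod_cast hr'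
    linarith
  rw [hnr]
  field_simp
end

section
/- For each natural number n, the hybrid polynomial ₂𝓛_n(x,y) = n! * ∑_{r=0}^{⌊n/2⌋} y^r x^(n-2r) / ((n-2r)! (r!)²) satisfies the PDE ∂/∂y( y ∂Ψ/∂y ) = ∂²Ψ/∂x², i.e., ∂Ψ/∂y + y ∂²Ψ/∂y² = ∂²Ψ/∂x², for all real x, y, together with the initial condition ₂𝓛_n(x,0) = x^n. -/
/-- Hybrid Hermite–Laguerre polynomials ₂𝓛ₙ. -/
noncomputable def hybridL (n : ℕ) (x y : ℝ) : ℝ :=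
  (n.factorial : ℝ) * ∑ r ∈ Finset.range (n / 2 + 1),
    y ^ r * x ^ (n - 2 * r) / (((n - 2 * r).factorial : ℝ) * ((r.factorial : ℝ)) ^ 2)

lemma deriv_sum_pow (a : ℕ → ℝ) (e : ℕ → ℕ) (N : ℕ) :
    deriv (fun t : ℝ => ∑ r ∈ Finset.range N, a r * t ^ (e r))
      = fun t => ∑ r ∈ Finset.range N, a r * ((e r : ℝ) * t ^ (e r - 1)) := by
  funext t
  exact (HasDerivAt.fun_sum fun r _ => (hasDerivAt_pow (e r) t).const_mul (a r)).deriv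

lemma deriv2_sum_pow (a : ℕ → ℝ) (e : ℕ → ℕ) (N : ℕ) :
    deriv (fun t : ℝ => ∑ r ∈ Finset.range N, a r * ((e r : ℝ) * t ^ (e r - 1)))
      = fun t => ∑ r ∈ Finset.range N,
          (a r * (e r : ℝ)) * (((e r - 1 : ℕ) : ℝ) * t ^ (e r - 2)) := by
  have h : (fun t : ℝ => ∑ r ∈ Finset.range N, a r * ((e r : ℝ) * t ^ (e r - 1)))
      = fun t => ∑ r ∈ Finset.range N, (a r * (e r : ℝ)) * t ^ (e r - 1) := by
    funext t; exact Finset.sum_congr rfl fun r _ => by ring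
  rw [h, deriv_sum_pow]
  funext t
  refine Finset.sum_congr rfl fun r _ => ?_
  have : e r - 1 - 1 = e r - 2 := by omega
  rw [this]

lemma hybridL_y (n : ℕ) (x : ℝ) :
    (fun t : ℝ => hybridL n x t)
      = fun t => ∑ r ∈ Finset.range (n / 2 + 1),
          ((n.factorial : ℝ) * x ^ (n - 2 * r) /
            (((n - 2 * r).factorial : ℝ) * ((r.factorial : ℝ)) ^ 2)) * t ^ r := by
  funext t
  unfold hybridL
  rw [Finset.mul_sum]
  exact Finset.sum_congr rfl fun r _ => by ring

lemma hybridL_x (n : ℕ) (y : ℝ) :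
    (fun s : ℝ => hybridL n s y)
      = fun s => ∑ r ∈ Finset.range (n / 2 + 1),
          ((n.factorial : ℝ) * y ^ r /
            (((n - 2 * r).factorial : ℝ) * ((r.factorial : ℝ)) ^ 2)) * s ^ (n - 2 * r) := by
  funext s
  unfold hybridL
  rw [Finset.mul_sum]
  exact Finset.sum_congr rfl fun r _ => by ring

theorem hybrid_pde (n : ℕ) :
    (∀ x y : ℝ,
      deriv (fun t => hybridL n x t) y + y * deriv (deriv (fun t => hybridL n x t)) y =
        deriv (deriv (fun s => hybridL n s y)) x) ∧
    (∀ x : ℝ, hybridL n x 0 = x ^ n) := by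
  constructor
  · intro x y
    set N := n / 2 + 1 with hN
    set a : ℕ → ℝ := fun r => (n.factorial : ℝ) * x ^ (n - 2 * r) /
        (((n - 2 * r).factorial : ℝ) * ((r.factorial : ℝ)) ^ 2) with ha
    set b : ℕ → ℝ := fun r => (n.factorial : ℝ) * y ^ r /
        (((n - 2 * r).factorial : ℝ) * ((r.factorial : ℝ)) ^ 2) with hb
    have ey : (fun t : ℝ => hybridL n x t)
        = fun t => ∑ r ∈ Finset.range N, a r * t ^ (id r) := hybridL_y n x
    have ex : (fun s : ℝ => hybridL n s y)
        = fun s => ∑ r ∈ Finset.range N, b r * s ^ (n - 2 * r) := hybridL_x n y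
    rw [ey, ex, deriv_sum_pow a id N, deriv2_sum_pow a id N,
      deriv_sum_pow b (fun r => n - 2 * r) N, deriv2_sum_pow b (fun r => n - 2 * r) N]
    simp only [id_eq]
    rw [Finset.mul_sum, ← Finset.sum_add_distrib]
    -- combine LHS termwise into L r = a r * r^2 * y^(r-1)
    have hL : ∀ r, a r * ((r : ℝ) * y ^ (r - 1)) +
        y * ((a r * (r : ℝ)) * (((r - 1 : ℕ) : ℝ) * y ^ (r - 2)))
        = a r * (r : ℝ) ^ 2 * y ^ (r - 1) := by
      intro r
      match r with
      | 0 => simp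
      | 1 => push_cast; ring
      | (r + 2) =>
        have h1 : r + 2 - 1 = r + 1 := rfl
        have h2 : r + 2 - 2 = r := rfl
        rw [h1, h2]
        push_cast
        ring
    rw [Finset.sum_congr rfl fun r _ => hL r]
    -- LHS: drop r = 0 (term is 0) and shift
    rw [hN, Finset.sum_range_succ' (fun r => a r * (r : ℝ) ^ 2 * y ^ (r - 1)) (n / 2)]
    simp only [Nat.cast_zero, ne_eq, OfNat.ofNat_ne_zero, not_false_eq_true, zero_pow,
      mul_zero, zero_mul, add_zero]
    -- RHS: drop r = n/2 term (it is 0)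
    rw [Finset.sum_range_succ]
    have htop : (b (n / 2) * ((n - 2 * (n / 2) : ℕ) : ℝ)) *
        (((n - 2 * (n / 2) - 1 : ℕ) : ℝ) * x ^ (n - 2 * (n / 2) - 2)) = 0 := by
      have h : n - 2 * (n / 2) = 0 ∨ n - 2 * (n / 2) = 1 := by omega
      rcases h with h | h <;> rw [h] <;> simp
    rw [htop, add_zero]
    refine Finset.sum_congr rfl fun r hr => ?_
    have hr' : 2 * r + 2 ≤ n := by
      have := Finset.mem_range.mp hr
      omega
    -- termwise identity
    have hm : n - 2 * r = (n - 2 * (r + 1)) + 2 := by omega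
    have hm2 : n - 2 * r - 2 = n - 2 * (r + 1) := by omega
    have hs : (r + 1) - 1 = r := rfl
    rw [ha, hb]
    simp only [hs, hm2, hm]
    have hfac : ((n - 2 * (r + 1)) + 2).factorial
        = ((n - 2 * (r + 1)) + 2) * (((n - 2 * (r + 1)) + 1) * (n - 2 * (r + 1)).factorial) := by
      rw [Nat.factorial_succ, Nat.factorial_succ]
    rw [hfac, Nat.factorial_succ]
    have pos1 : ((n - 2 * (r + 1)).factorial : ℝ) ≠ 0 :=
      Nat.cast_ne_zero.mpr (Nat.factorial_ne_zero _)
    have pos2 : ((r.factorial : ℝ)) ≠ 0 := Nat.cast_ne_zero.mpr (Nat.factorial_ne_zero _)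
    push_cast
    have h1 : ((n - 2 * (r + 1) : ℕ) : ℝ) + 2 ≠ 0 := by positivity
    have h2 : ((n - 2 * (r + 1) : ℕ) : ℝ) + 1 ≠ 0 := by positivity
    have h3 : ((r : ℕ) : ℝ) + 1 ≠ 0 := by positivity
    field_simp
  · intro x
    unfold hybridL
    rw [Finset.sum_eq_single_of_mem 0 (Finset.mem_range.mpr (Nat.succ_pos _))]
    · simp [Nat.factorial_ne_zero]
      rw [mul_comm]
      rw [div_mul_cancel₀]
      exact Nat.cast_ne_zero.mpr (Nat.factorial_ne_zero _)
    · intro r _ hr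
      simp [zero_pow hr]
end

section
/- Let α, β, γ be real constants and n ≥ 1. The function Ψ(x,y) = H_n(x + αy, βy, γy), where H_n(x₁,x₂,x₃) is the three-variable Hermite polynomial, satisfies ∂Ψ/∂y = α ∂Ψ/∂x + β ∂²Ψ/∂x² + γ ∂³Ψ/∂x³ with Ψ(x,0) = x^n. -/
/-- Three-variable Hermite polynomials
`H_n(x₁,x₂,x₃) = n! ∑_{3r+2s+k=n} x₁^k x₂^s x₃^r / (k! s! r!)`. -/
noncomputable def H3v (n : ℕ) (x₁ x₂ x₃ : ℝ) : ℝ :=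
  (n.factorial : ℝ) * ∑ r ∈ Finset.range (n / 3 + 1),
    ∑ s ∈ Finset.range ((n - 3 * r) / 2 + 1),
      x₃ ^ r * x₂ ^ s * x₁ ^ (n - 3 * r - 2 * s) /
        (((n - 3 * r - 2 * s).factorial : ℝ) * (s.factorial : ℝ) * (r.factorial : ℝ))

noncomputable def cf (n r s : ℕ) : ℝ :=
  (n.descFactorial (3*r+2*s) : ℝ) / ((s.factorial : ℝ) * (r.factorial : ℝ))

noncomputable def Fj (α β γ : ℝ) (n j : ℕ) (x y : ℝ) : ℝ :=
  ∑ r ∈ Finset.range (n+1), ∑ s ∈ Finset.range (n+1),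
    cf n r s * (γ*y)^r * (β*y)^s *
      (((n-3*r-2*s).descFactorial j : ℝ) * (x+α*y)^(n-3*r-2*s-j))

lemma H3v_eq (n : ℕ) (u v w : ℝ) :
    H3v n u v w = ∑ r ∈ Finset.range (n+1), ∑ s ∈ Finset.range (n+1),
      cf n r s * w ^ r * v ^ s * u ^ (n - 3*r - 2*s) := by
  rw [H3v, Finset.mul_sum]
  have hvan : ∀ r ∈ Finset.range (n+1), r ∉ Finset.range (n/3+1) →
      (∑ s ∈ Finset.range (n+1), cf n r s * w ^ r * v ^ s * u ^ (n - 3*r - 2*s)) = 0 := by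
    intro r _ hr
    rw [Finset.mem_range] at hr
    refine Finset.sum_eq_zero fun s _ => ?_
    have : n.descFactorial (3*r+2*s) = 0 :=
      Nat.descFactorial_eq_zero_iff_lt.mpr (by omega)
    rw [cf, this]
    simp
  rw [← Finset.sum_subset (Finset.range_subset_range.mpr (show n/3+1 ≤ n+1 by omega)) hvan]
  refine Finset.sum_congr rfl fun r hr => ?_
  rw [Finset.mem_range] at hr
  have h3r : 3*r ≤ n := by omega
  rw [Finset.mul_sum]
  have hvan2 : ∀ s ∈ Finset.range (n+1), s ∉ Finset.range ((n-3*r)/2+1) →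
      cf n r s * w ^ r * v ^ s * u ^ (n - 3*r - 2*s) = 0 := by
    intro s _ hs
    rw [Finset.mem_range] at hs
    have : n.descFactorial (3*r+2*s) = 0 :=
      Nat.descFactorial_eq_zero_iff_lt.mpr (by omega)
    rw [cf, this]
    simp
  rw [← Finset.sum_subset (Finset.range_subset_range.mpr (show (n-3*r)/2+1 ≤ n+1 by omega)) hvan2]
  refine Finset.sum_congr rfl fun s hs => ?_
  rw [Finset.mem_range] at hs
  have hle : 3*r+2*s ≤ n := by omega
  have hfac : ((n - 3*r - 2*s).factorial : ℝ) * (n.descFactorial (3*r+2*s) : ℝ)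
      = (n.factorial : ℝ) := by
    have h := Nat.factorial_mul_descFactorial hle
    have : n - (3*r+2*s) = n - 3*r - 2*s := by omega
    rw [this] at h
    exact_mod_cast h
  have h1 : ((n - 3*r - 2*s).factorial : ℝ) ≠ 0 := Nat.cast_ne_zero.mpr (Nat.factorial_ne_zero _)
  have h2 : (s.factorial : ℝ) ≠ 0 := Nat.cast_ne_zero.mpr (Nat.factorial_ne_zero _)
  have h3 : (r.factorial : ℝ) ≠ 0 := Nat.cast_ne_zero.mpr (Nat.factorial_ne_zero _)
  rw [cf, ← hfac]
  field_simp

lemma Fj_hasDerivAt_x (α β γ : ℝ) (n j : ℕ) (x y : ℝ) :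
    HasDerivAt (fun x => Fj α β γ n j x y) (Fj α β γ n (j+1) x y) x := by
  have key : ∀ (C : ℝ) (m : ℕ), HasDerivAt (fun x : ℝ => C * (x + α*y)^m)
      (C * (↑m * (x + α*y)^(m-1))) x := fun C m => by
    simpa using (((hasDerivAt_id x).add_const (α*y)).pow m).const_mul C
  have H : HasDerivAt (fun x => Fj α β γ n j x y)
      (∑ r ∈ Finset.range (n+1), ∑ s ∈ Finset.range (n+1),
        (cf n r s * (γ*y)^r * (β*y)^s * ((n-3*r-2*s).descFactorial j : ℝ)) *
          (↑(n-3*r-2*s-j) * (x+α*y)^(n-3*r-2*s-j-1))) x := by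
    unfold Fj
    refine HasDerivAt.fun_sum fun r _ => HasDerivAt.fun_sum fun s _ => ?_
    have h := key (cf n r s * (γ*y)^r * (β*y)^s * ((n-3*r-2*s).descFactorial j : ℝ))
      (n-3*r-2*s-j)
    have e1 : (fun x : ℝ => (cf n r s * (γ*y)^r * (β*y)^s *
          ((n-3*r-2*s).descFactorial j : ℝ)) * (x + α*y)^(n-3*r-2*s-j))
        = fun x => cf n r s * (γ*y)^r * (β*y)^s *
          (((n-3*r-2*s).descFactorial j : ℝ) * (x+α*y)^(n-3*r-2*s-j)) := by
      funext x; ring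
    rw [e1] at h
    exact h
  have e : (∑ r ∈ Finset.range (n+1), ∑ s ∈ Finset.range (n+1),
        (cf n r s * (γ*y)^r * (β*y)^s * ((n-3*r-2*s).descFactorial j : ℝ)) *
          (↑(n-3*r-2*s-j) * (x+α*y)^(n-3*r-2*s-j-1)))
      = Fj α β γ n (j+1) x y := by
    unfold Fj
    refine Finset.sum_congr rfl fun r _ => Finset.sum_congr rfl fun s _ => ?_
    have h1 : ((n-3*r-2*s).descFactorial (j+1) : ℝ)
        = ((n-3*r-2*s-j : ℕ) : ℝ) * ((n-3*r-2*s).descFactorial j : ℝ) := by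
      rw [Nat.descFactorial_succ]; push_cast; ring
    have h2 : n-3*r-2*s-j-1 = n-3*r-2*s-(j+1) := by omega
    rw [← h2, h1]
    ring
  exact e ▸ H

noncomputable def Dy (α β γ : ℝ) (n : ℕ) (x y : ℝ) : ℝ :=
  ∑ r ∈ Finset.range (n+1), ∑ s ∈ Finset.range (n+1),
    cf n r s * ((↑r * (γ*y)^(r-1) * γ) * ((β*y)^s * (x+α*y)^(n-3*r-2*s))
      + (γ*y)^r * ((↑s * (β*y)^(s-1) * β) * (x+α*y)^(n-3*r-2*s)
          + (β*y)^s * (↑(n-3*r-2*s) * (x+α*y)^(n-3*r-2*s-1) * α)))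

lemma Fj_zero_eq (α β γ : ℝ) (n : ℕ) (x y : ℝ) :
    Fj α β γ n 0 x y = ∑ r ∈ Finset.range (n+1), ∑ s ∈ Finset.range (n+1),
      cf n r s * ((γ*y)^r * ((β*y)^s * (x+α*y)^(n-3*r-2*s))) := by
  unfold Fj
  refine Finset.sum_congr rfl fun r _ => Finset.sum_congr rfl fun s _ => ?_
  rw [Nat.descFactorial_zero, Nat.sub_zero]
  push_cast
  ring

lemma Fj_hasDerivAt_y (α β γ : ℝ) (n : ℕ) (x y : ℝ) :
    HasDerivAt (fun y => Fj α β γ n 0 x y) (Dy α β γ n x y) y := by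
  have e : (fun y => Fj α β γ n 0 x y) = fun y =>
      ∑ r ∈ Finset.range (n+1), ∑ s ∈ Finset.range (n+1),
        cf n r s * ((γ*y)^r * ((β*y)^s * (x+α*y)^(n-3*r-2*s))) :=
    funext fun y => Fj_zero_eq α β γ n x y
  rw [e, Dy]
  refine HasDerivAt.fun_sum fun r _ => HasDerivAt.fun_sum fun s _ => ?_
  have hw : HasDerivAt (fun y : ℝ => γ * y) γ y := by
    simpa using (hasDerivAt_id y).const_mul γ
  have hv : HasDerivAt (fun y : ℝ => β * y) β y := by
    simpa using (hasDerivAt_id y).const_mul β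
  have hu : HasDerivAt (fun y : ℝ => x + α * y) α y := by
    simpa using ((hasDerivAt_id y).const_mul α).const_add x
  exact ((hw.pow r).mul ((hv.pow s).mul (hu.pow (n-3*r-2*s)))).const_mul (cf n r s)

lemma key_sum (α β γ : ℝ) (n : ℕ) (x y : ℝ) :
    Dy α β γ n x y = α * Fj α β γ n 1 x y + β * Fj α β γ n 2 x y
      + γ * Fj α β γ n 3 x y := by
  have claim3 :
      (∑ r ∈ Finset.range (n+1), ∑ s ∈ Finset.range (n+1),
        cf n r s * ((γ*y)^r * ((β*y)^s *
          (↑(n-3*r-2*s) * (x+α*y)^(n-3*r-2*s-1) * α))))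
      = α * Fj α β γ n 1 x y := by
    rw [Fj, Finset.mul_sum]
    refine Finset.sum_congr rfl fun r _ => ?_
    rw [Finset.mul_sum]
    refine Finset.sum_congr rfl fun s _ => ?_
    rw [Nat.descFactorial_one]
    ring
  have claim1 :
      (∑ r ∈ Finset.range (n+1), ∑ s ∈ Finset.range (n+1),
        cf n r s * ((↑r * (γ*y)^(r-1) * γ) * ((β*y)^s * (x+α*y)^(n-3*r-2*s))))
      = γ * Fj α β γ n 3 x y := by
    rw [Fj, Finset.mul_sum]
    rw [Finset.sum_range_succ' (fun r => ∑ s ∈ Finset.range (n+1),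
        cf n r s * ((↑r * (γ*y)^(r-1) * γ) * ((β*y)^s * (x+α*y)^(n-3*r-2*s)))) n]
    rw [Finset.sum_range_succ (fun r => γ * ∑ s ∈ Finset.range (n+1),
        cf n r s * (γ*y)^r * (β*y)^s *
          (((n-3*r-2*s).descFactorial 3 : ℝ) * (x+α*y)^(n-3*r-2*s-3))) n]
    have f0 : (∑ s ∈ Finset.range (n+1),
        cf n 0 s * ((↑(0:ℕ) * (γ*y)^(0-1) * γ) * ((β*y)^s * (x+α*y)^(n-3*0-2*s)))) = 0 :=
      Finset.sum_eq_zero fun s _ => by simp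
    have gn : (γ * ∑ s ∈ Finset.range (n+1),
        cf n n s * (γ*y)^n * (β*y)^s *
          (((n-3*n-2*s).descFactorial 3 : ℝ) * (x+α*y)^(n-3*n-2*s-3))) = 0 := by
      rw [Finset.sum_eq_zero, mul_zero]
      intro s _
      have h0 : n-3*n-2*s = 0 := by omega
      rw [h0]
      norm_num [Nat.descFactorial]
    rw [f0, gn, add_zero, add_zero]
    refine Finset.sum_congr rfl fun i _ => ?_
    rw [Finset.mul_sum]
    refine Finset.sum_congr rfl fun s _ => ?_
    have hnat : (n - 3*i - 2*s).descFactorial 3 * n.descFactorial (3*i+2*s)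
        = n.descFactorial (3*(i+1)+2*s) := by
      have h := Nat.descFactorial_mul_descFactorial
        (k := 3*i+2*s) (m := 3*(i+1)+2*s) (n := n) (by omega)
      simpa [show 3*(i+1)+2*s - (3*i+2*s) = 3 by omega,
        show n - (3*i+2*s) = n - 3*i - 2*s by omega] using h
    have e1 : n - 3*(i+1) - 2*s = n - 3*i - 2*s - 3 := by omega
    have e2 : (n.descFactorial (3*(i+1)+2*s) : ℝ)
        = ((n-3*i-2*s).descFactorial 3 : ℝ) * (n.descFactorial (3*i+2*s) : ℝ) := by
      exact_mod_cast congrArg (Nat.cast (R := ℝ)) hnat.symm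
    have hfact : ((i+1).factorial : ℝ) = ((i:ℝ)+1) * (i.factorial : ℝ) := by
      rw [Nat.factorial_succ]; push_cast; ring
    rw [cf, cf, e1, e2, hfact]
    have h2 : (s.factorial : ℝ) ≠ 0 := Nat.cast_ne_zero.mpr (Nat.factorial_ne_zero _)
    have h3 : (i.factorial : ℝ) ≠ 0 := Nat.cast_ne_zero.mpr (Nat.factorial_ne_zero _)
    have h4 : ((i:ℝ)+1) ≠ 0 := by positivity
    push_cast
    field_simp
  have claim2 :
      (∑ r ∈ Finset.range (n+1), ∑ s ∈ Finset.range (n+1),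
        cf n r s * ((γ*y)^r * ((↑s * (β*y)^(s-1) * β) * (x+α*y)^(n-3*r-2*s))))
      = β * Fj α β γ n 2 x y := by
    rw [Fj, Finset.mul_sum]
    refine Finset.sum_congr rfl fun r _ => ?_
    rw [Finset.mul_sum]
    rw [Finset.sum_range_succ' (fun s =>
        cf n r s * ((γ*y)^r * ((↑s * (β*y)^(s-1) * β) * (x+α*y)^(n-3*r-2*s)))) n]
    rw [Finset.sum_range_succ (fun s => β * (cf n r s * (γ*y)^r * (β*y)^s *
          (((n-3*r-2*s).descFactorial 2 : ℝ) * (x+α*y)^(n-3*r-2*s-2)))) n]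
    have f0 : cf n r 0 * ((γ*y)^r * ((↑(0:ℕ) * (β*y)^(0-1) * β) * (x+α*y)^(n-3*r-2*0))) = 0 := by
      simp
    have gn : β * (cf n r n * (γ*y)^r * (β*y)^n *
        (((n-3*r-2*n).descFactorial 2 : ℝ) * (x+α*y)^(n-3*r-2*n-2))) = 0 := by
      have h0 : n-3*r-2*n = 0 := by omega
      rw [h0]
      norm_num [Nat.descFactorial]
    rw [f0, gn, add_zero, add_zero]
    refine Finset.sum_congr rfl fun i _ => ?_
    have hnat : (n - 3*r - 2*i).descFactorial 2 * n.descFactorial (3*r+2*i)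
        = n.descFactorial (3*r+2*(i+1)) := by
      have h := Nat.descFactorial_mul_descFactorial
        (k := 3*r+2*i) (m := 3*r+2*(i+1)) (n := n) (by omega)
      simpa [show 3*r+2*(i+1) - (3*r+2*i) = 2 by omega,
        show n - (3*r+2*i) = n - 3*r - 2*i by omega] using h
    have e1 : n - 3*r - 2*(i+1) = n - 3*r - 2*i - 2 := by omega
    have e2 : (n.descFactorial (3*r+2*(i+1)) : ℝ)
        = ((n-3*r-2*i).descFactorial 2 : ℝ) * (n.descFactorial (3*r+2*i) : ℝ) := by
      exact_mod_cast congrArg (Nat.cast (R := ℝ)) hnat.symm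
    have hfact : ((i+1).factorial : ℝ) = ((i:ℝ)+1) * (i.factorial : ℝ) := by
      rw [Nat.factorial_succ]; push_cast; ring
    rw [cf, cf, e1, e2, hfact]
    have h2 : (i.factorial : ℝ) ≠ 0 := Nat.cast_ne_zero.mpr (Nat.factorial_ne_zero _)
    have h3 : (r.factorial : ℝ) ≠ 0 := Nat.cast_ne_zero.mpr (Nat.factorial_ne_zero _)
    have h4 : ((i:ℝ)+1) ≠ 0 := by positivity
    push_cast
    generalize ((n - 3 * r - 2 * i).descFactorial 2 : ℝ) = A
    generalize (n.descFactorial (3 * r + 2 * i) : ℝ) = B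
    field_simp
  rw [← claim1, ← claim2, ← claim3, Dy]
  rw [← Finset.sum_add_distrib, ← Finset.sum_add_distrib]
  refine Finset.sum_congr rfl fun r _ => ?_
  rw [← Finset.sum_add_distrib, ← Finset.sum_add_distrib]
  refine Finset.sum_congr rfl fun s _ => ?_
  ring

lemma H3v_init (n : ℕ) (x : ℝ) : H3v n x 0 0 = x ^ n := by
  rw [H3v]
  rw [Finset.sum_eq_single_of_mem 0 (Finset.mem_range.mpr (Nat.succ_pos _))]
  · rw [Finset.sum_eq_single_of_mem 0 (Finset.mem_range.mpr (Nat.succ_pos _))]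
    · have h1 : (n.factorial : ℝ) ≠ 0 := Nat.cast_ne_zero.mpr (Nat.factorial_ne_zero _)
      simp
      field_simp
    · intro s _ hs0
      simp [zero_pow hs0]
  · intro r _ hr0
    refine Finset.sum_eq_zero fun s _ => ?_
    simp [zero_pow hr0]

theorem shifted_hermite_solves_pde (α β γ : ℝ) (n : ℕ) (hn : 1 ≤ n)
    (Ψ : ℝ → ℝ → ℝ)
    (hΨ : ∀ x y : ℝ, Ψ x y = H3v n (x + α * y) (β * y) (γ * y)) :
    (∀ x y : ℝ,
      deriv (fun t => Ψ x t) y =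
        α * deriv (fun s => Ψ s y) x + β * deriv (deriv (fun s => Ψ s y)) x
          + γ * deriv (deriv (deriv (fun s => Ψ s y))) x) ∧
    (∀ x : ℝ, Ψ x 0 = x ^ n) := by
  have hFj0 : ∀ x y : ℝ, Ψ x y = Fj α β γ n 0 x y := by
    intro x y
    rw [hΨ, H3v_eq, Fj_zero_eq]
    refine Finset.sum_congr rfl fun r _ => Finset.sum_congr rfl fun s _ => ?_
    ring
  constructor
  · intro x y
    have e1 : (fun t => Ψ x t) = fun t => Fj α β γ n 0 x t := funext fun t => hFj0 x t
    have e2 : (fun s => Ψ s y) = fun s => Fj α β γ n 0 s y := funext fun s => hFj0 s y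
    have v1 : deriv (fun s => Fj α β γ n 0 s y) = fun s => Fj α β γ n 1 s y :=
      funext fun t => (Fj_hasDerivAt_x α β γ n 0 t y).deriv
    have v2 : deriv (fun s => Fj α β γ n 1 s y) = fun s => Fj α β γ n 2 s y :=
      funext fun t => (Fj_hasDerivAt_x α β γ n 1 t y).deriv
    have v3 : deriv (fun s => Fj α β γ n 2 s y) = fun s => Fj α β γ n 3 s y :=
      funext fun t => (Fj_hasDerivAt_x α β γ n 2 t y).deriv
    have vy : deriv (fun t => Fj α β γ n 0 x t) y = Dy α β γ n x y :=
      (Fj_hasDerivAt_y α β γ n x y).deriv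
    rw [e1, e2, v1, v2, v3, vy]
    exact key_sum α β γ n x y
  · intro x
    rw [hΨ]
    simpa using H3v_init n x
end
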